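/- (Boundedness of the approximating solutions.) Let E be a measurable space, t > 0, and (κ_{r,s})_{0 ≤ r ≤ s ≤ t} a family of probability kernels from E to E satisfying the Chapman–Kolmogorov relations. Let Q ≥ 0 and let ψ be an operator mapping bounded measurable functions E → ℝ to bounded measurable functions such that ψ(z)(x) ≥ −Q·‖z‖∞ for every bounded measurable z ≥ 0 and every x. Let φ : E → ℝ be bounded measurable with φ ≥ 0, let ε > 0 and set f_ε(y) := (1 − e^{−εφ(y)})/ε. Let w : [0, t] × E → ℝ be jointly measurable, bounded, nonnegative, with (s,y) ↦ ψ(w(s,·))(y) jointly measurable and bounded, such that for all r ∈ [0, t] and x ∈ E: w(r, x) = ∫_E f_ε(y) κ_{r,t}(x, dy) − ∫_r^t ∫_E ψ(w(s,·))(y) κ_{r,s}(x, dy) ds. Let 0 = t₀ < t₁ < ... < t_n = t be a partition with Q·(t_j − t_{j−1}) ≤ 1/2 for every j. Then sup_{r ∈ [t_{j−1}, t_j), x ∈ E} |w(r, x)| ≤ 2^{n−j+1}·‖φ‖∞ for each j = 1, …, n; in particular sup_{x ∈ E} |w(0, x)| ≤ 2^n·‖φ‖∞. -/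

import Mathlib

open MeasureTheory ProbabilityTheory

private lemma aux_two_pow_sum (m : ℕ) :
    ∑ k ∈ Finset.range m, (2:ℝ) ^ (m - k) = 2 ^ (m+1) - 2 := by
  induction m with
  | zero => simp
  | succ m ih =>
    rw [Finset.sum_range_succ']
    simp only [Nat.succ_sub_succ, Nat.sub_zero]
    rw [ih]
    ring

/-- **Boundedness of the approximating solutions `v_t^ε φ`.**
Let `(κ r s)_{0 ≤ r ≤ s ≤ t}` be probability kernels satisfying Chapman–Kolmogorov,
`ψ(z)(x) ≥ −Q ‖z‖∞` for bounded measurable `z ≥ 0`, `φ ≥ 0` bounded measurable, `ε > 0`,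
`f_ε(y) := (1 − e^{−εφ(y)})/ε`, and let the nonnegative, bounded, jointly measurable `w`
satisfy the evolution equation
`w(r,x) = ∫ f_ε dκ_{r,t}(x,·) − ∫_r^t ∫ ψ(w(s,·))(y) κ_{r,s}(x, dy) ds` on `[0,t] × E`.
Then along a partition `0 = t₀ < t₁ < ⋯ < t_n = t` with `Q (t_j − t_{j−1}) ≤ 1/2`,
`sup_{r ∈ [t_{j−1}, t_j), x} |w(r,x)| ≤ 2^{n−j+1} ‖φ‖∞`; in particular
`sup_x |w(0,x)| ≤ 2^n ‖φ‖∞`.  (Below, `i : Fin n` encodes the interval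
`[t_i, t_{i+1})`, i.e. the paper's index `j = i + 1`, so the bound reads `2^{n−i}`.) -/
theorem boundedness_of_approximating_solutions {E : Type*} [MeasurableSpace E]
    (t : ℝ) (htpos : 0 < t)
    (κ : ℝ → ℝ → Kernel E E)
    (hκ : ∀ r s, 0 ≤ r → r ≤ s → s ≤ t → IsMarkovKernel (κ r s))
    (hCK : ∀ r s u, 0 ≤ r → r ≤ s → s ≤ u → u ≤ t → κ r u = (κ s u).comp (κ r s))
    (Q : ℝ) (hQ : 0 ≤ Q)
    (ψ : (E → ℝ) → E → ℝ)
    (hψmeas : ∀ z : E → ℝ, Measurable z → (∃ B : ℝ, ∀ x, |z x| ≤ B) →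
      Measurable (ψ z) ∧ ∃ B : ℝ, ∀ x, |ψ z x| ≤ B)
    (hψlow : ∀ z : E → ℝ, Measurable z → (∃ B : ℝ, ∀ x, |z x| ≤ B) →
      (∀ x, 0 ≤ z x) → ∀ x, -Q * (⨆ x', |z x'|) ≤ ψ z x)
    (φ : E → ℝ) (hφm : Measurable φ) (hφb : ∃ B : ℝ, ∀ x, |φ x| ≤ B)
    (hφpos : ∀ x, 0 ≤ φ x)
    (ε : ℝ) (hε : 0 < ε)
    (w : ℝ → E → ℝ)
    (hwm : Measurable (fun p : ℝ × E => w p.1 p.2))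
    (hwb : ∃ B : ℝ, ∀ s y, |w s y| ≤ B)
    (hwpos : ∀ s y, 0 ≤ w s y)
    (hψw : Measurable (fun p : ℝ × E => ψ (w p.1) p.2) ∧ ∃ B : ℝ, ∀ s y, |ψ (w s) y| ≤ B)
    (hfix : ∀ r ∈ Set.Icc (0 : ℝ) t, ∀ x : E,
      w r x = (∫ y, (1 - Real.exp (-ε * φ y)) / ε ∂(κ r t x)) -
        ∫ s in r..t, ∫ y, ψ (w s) y ∂(κ r s x))
    (n : ℕ) (hn : 0 < n)
    (tp : Fin (n + 1) → ℝ) (htp0 : tp 0 = 0) (htpn : tp (Fin.last n) = t)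
    (htpmono : StrictMono tp)
    (hmesh : ∀ i : Fin n, Q * (tp i.succ - tp i.castSucc) ≤ 1 / 2) :
    (∀ i : Fin n, ∀ r ∈ Set.Ico (tp i.castSucc) (tp i.succ), ∀ x : E,
        |w r x| ≤ 2 ^ (n - (i : ℕ)) * ⨆ x', |φ x'|) ∧
      (∀ x : E, |w 0 x| ≤ 2 ^ n * ⨆ x', |φ x'|) := by
  classical
  rcases isEmpty_or_nonempty E with hEe | hEne
  · exact ⟨fun i r hr x => (hEe.false x).elim, fun x => (hEe.false x).elim⟩
  obtain ⟨x0⟩ := hEne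
  haveI : Nonempty E := ⟨x0⟩
  set M : ℝ := ⨆ x', |φ x'| with hMdef
  obtain ⟨Bφ, hBφ⟩ := hφb
  have hbddφ : BddAbove (Set.range fun x' : E => |φ x'|) :=
    ⟨Bφ, by rintro _ ⟨y, rfl⟩; exact hBφ y⟩
  have hφleM : ∀ y, φ y ≤ M := fun y => (le_abs_self _).trans (le_ciSup hbddφ y)
  have hM0 : 0 ≤ M := (hφpos x0).trans (hφleM x0)
  obtain ⟨Bw, hBw⟩ := hwb
  have habs : ∀ s y, |w s y| = w s y := fun s y => abs_of_nonneg (hwpos s y)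
  set τ : ℕ → ℝ := fun k => tp ⟨min k n, Nat.lt_succ_of_le (min_le_right k n)⟩ with hτdef
  have hτcs : ∀ (k : ℕ) (hk : k < n), τ k = tp (Fin.castSucc ⟨k, hk⟩) := by
    intro k hk
    simp only [hτdef]
    congr 1
    exact Fin.ext (by simp [Nat.min_eq_left hk.le])
  have hτsc : ∀ (k : ℕ) (hk : k < n), τ (k + 1) = tp (Fin.succ ⟨k, hk⟩) := by
    intro k hk
    simp only [hτdef]
    congr 1
    exact Fin.ext (by simp [Nat.min_eq_left hk])
  have hτn : τ n = t := by
    simp only [hτdef]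
    rw [← htpn]
    congr 1
    exact Fin.ext (by simp [Fin.last])
  have hr0 : ∀ i : Fin n, (0 : ℝ) ≤ tp i.castSucc := by
    intro i
    rw [← htp0]
    exact htpmono.monotone (Fin.zero_le _)
  have hle_t : ∀ i : Fin n, tp i.succ ≤ t := by
    intro i
    rw [← htpn]
    exact htpmono.monotone (Fin.le_last _)
  have key : ∀ m : ℕ, ∀ i : Fin n, n - (i : ℕ) ≤ m →
      ∀ r ∈ Set.Ico (tp i.castSucc) (tp i.succ), ∀ x : E, w r x ≤ 2 ^ (n - (i : ℕ)) * M := by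
    intro m
    induction m with
    | zero =>
      intro i hi
      exact absurd hi (by have := i.isLt; omega)
    | succ m ih =>
      intro i hi
      by_cases hcase : n - (i : ℕ) ≤ m
      · exact ih i hcase
      have hin : (i : ℕ) < n := i.isLt
      have he : n - (i : ℕ) = m + 1 := by omega
      have hτi1 : τ (i : ℕ) = tp i.castSucc := by rw [hτcs _ hin, Fin.eta]
      have hτi2 : τ ((i : ℕ) + 1) = tp i.succ := by rw [hτsc _ hin, Fin.eta]
      have hIcoNe : (Set.Ico (tp i.castSucc) (tp i.succ)).Nonempty :=
        ⟨tp i.castSucc, le_refl _, htpmono Fin.castSucc_lt_succ⟩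
      haveI : Nonempty (Set.Ico (tp i.castSucc) (tp i.succ)) := hIcoNe.to_subtype
      set Mi : ℝ := ⨆ p : (Set.Ico (tp i.castSucc) (tp i.succ)) × E, w p.1 p.2 with hMidef
      have hbddMi : BddAbove (Set.range
          fun p : (Set.Ico (tp i.castSucc) (tp i.succ)) × E => w (p.1 : ℝ) p.2) := by
        refine ⟨Bw, ?_⟩
        rintro _ ⟨p, rfl⟩
        exact (le_abs_self _).trans (hBw _ _)
      have hwleMi : ∀ r, r ∈ Set.Ico (tp i.castSucc) (tp i.succ) → ∀ x : E, w r x ≤ Mi :=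
        fun r hr x => le_ciSup hbddMi (⟨⟨r, hr⟩, x⟩)
      have hMi0 : 0 ≤ Mi := by
        obtain ⟨r0, hr0'⟩ := hIcoNe
        exact (hwpos r0 x0).trans (hwleMi r0 hr0' x0)
      set c : ℕ → ℝ := fun k => if k = (i : ℕ) then Mi else 2 ^ (n - k) * M with hcdef
      have hc0 : ∀ k, 0 ≤ c k := by
        intro k
        simp only [hcdef]
        split
        · exact hMi0
        · positivity
      have hgc : ∀ k, (i : ℕ) ≤ k → k < n → ∀ s, τ k ≤ s → s < τ (k + 1) →
          ∀ y : E, w s y ≤ c k := by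
        intro k hik hkn s hs1 hs2 y
        by_cases hk : k = (i : ℕ)
        · subst hk
          rw [hτi1] at hs1
          rw [hτi2] at hs2
          have := hwleMi s ⟨hs1, hs2⟩ y
          simpa [hcdef] using this
        · have hkm : n - k ≤ m := by omega
          have h1 : τ k ≤ s := hs1
          have := ih ⟨k, hkn⟩ hkm s
            ⟨by rw [← hτcs k hkn]; exact hs1, by rw [← hτsc k hkn]; exact hs2⟩ y
          simp only [hcdef, if_neg hk]
          simpa using this
      have crux : ∀ r ∈ Set.Ico (tp i.castSucc) (tp i.succ), ∀ x : E,
          w r x ≤ (1 / 2) * Mi + 2 ^ m * M := by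
        intro r hr x
        have h0r : (0 : ℝ) ≤ r := (hr0 i).trans hr.1
        have hrt : r ≤ t := hr.2.le.trans (hle_t i)
        have heq := hfix r ⟨h0r, hrt⟩ x
        set F : ℝ → ℝ := fun s => ∫ y, ψ (w s) y ∂(κ r s x) with hFdef
        set h : ℝ → ℝ := fun u => ∑ k ∈ Finset.Ico (i : ℕ) n,
          Set.indicator (Set.Ico (τ k) (τ (k + 1))) (fun _ => c k) u with hhdef
        have hτle : ∀ k, k < n → τ k ≤ τ (k + 1) := by
          intro k hk
          rw [hτcs k hk, hτsc k hk]
          exact (htpmono Fin.castSucc_lt_succ).le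
        have hind_int : ∀ k ∈ Finset.Ico (i : ℕ) n,
            Integrable (fun u => Set.indicator (Set.Ico (τ k) (τ (k + 1)))
              (fun _ => c k) u) := by
          intro k hk
          rw [integrable_indicator_iff measurableSet_Ico]
          refine integrableOn_const ?_
          rw [Real.volume_Ico]
          exact ENNReal.ofReal_ne_top
        have hh_int : Integrable h := by
          rw [hhdef]
          exact integrable_finset_sum _ hind_int
        have hhnn : ∀ u, 0 ≤ h u := by
          intro u
          simp only [hhdef]
          exact Finset.sum_nonneg fun k hk => Set.indicator_nonneg (fun _ _ => hc0 k) u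
        have hh_val : ∫ u, h u = ∑ k ∈ Finset.Ico (i : ℕ) n, (τ (k + 1) - τ k) * c k := by
          simp only [hhdef]
          rw [integral_finset_sum _ hind_int]
          refine Finset.sum_congr rfl fun k hk => ?_
          rw [integral_indicator_const _ measurableSet_Ico,
            Real.volume_real_Ico_of_le (hτle k (Finset.mem_Ico.1 hk).2),
            smul_eq_mul]
        have hFlb : ∀ s, r ≤ s → s < t → -(Q * h s) ≤ F s := by
          intro s hs1 hs2
          have hst : s ≤ t := hs2.le
          set P : ℕ → Prop := fun k => τ k ≤ s with hPdef
          have hPi : P (i : ℕ) := by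
            show τ (i : ℕ) ≤ s
            rw [hτi1]
            exact hr.1.trans hs1
          have hkle : Nat.findGreatest P n ≤ n := Nat.findGreatest_le n
          have hPk : P (Nat.findGreatest P n) := Nat.findGreatest_spec hin.le hPi
          have hklt : Nat.findGreatest P n < n := by
            rcases lt_or_eq_of_le hkle with hlt | heqn
            · exact hlt
            · exfalso
              have h2 : τ n ≤ s := by rw [← heqn]; exact hPk
              rw [hτn] at h2
              linarith
          have hik2 : (i : ℕ) ≤ Nat.findGreatest P n := Nat.le_findGreatest hin.le hPi
          have hnP : ¬ P (Nat.findGreatest P n + 1) :=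
            Nat.findGreatest_is_greatest (Nat.lt_succ_self _) hklt
          set k := Nat.findGreatest P n with hkdef
          have hsk1 : τ k ≤ s := hPk
          have hsk2 : s < τ (k + 1) := not_le.1 hnP
          have hgs : ∀ y, w s y ≤ c k := hgc k hik2 hklt s hsk1 hsk2
          have hhs : c k ≤ h s := by
            have hmem : s ∈ Set.Ico (τ k) (τ (k + 1)) := ⟨hsk1, hsk2⟩
            have heval : Set.indicator (Set.Ico (τ k) (τ (k + 1))) (fun _ => c k) s = c k :=
              Set.indicator_of_mem hmem _
            have hsingle := Finset.single_le_sum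
              (f := fun k' => Set.indicator (Set.Ico (τ k') (τ (k' + 1))) (fun _ => c k') s)
              (fun k' _ => Set.indicator_nonneg (fun _ _ => hc0 k') s)
              (Finset.mem_Ico.2 ⟨hik2, hklt⟩)
            simpa only [hhdef] using le_trans (le_of_eq heval.symm) hsingle
          haveI := (hκ r s h0r hs1 hst).isProbabilityMeasure x
          have hwsm : Measurable (w s) := hwm.comp measurable_prodMk_left
          have hψm : Measurable fun y => ψ (w s) y := hψw.1.comp measurable_prodMk_left
          obtain ⟨Bψ, hBψ⟩ := hψw.2
          have hψint : Integrable (fun y => ψ (w s) y) (κ r s x) := by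
            refine Integrable.mono' (integrable_const Bψ) hψm.aestronglyMeasurable ?_
            exact Filter.Eventually.of_forall fun y => by simpa using hBψ s y
          have hlow : ∀ y : E, -Q * (⨆ y', |w s y'|) ≤ ψ (w s) y :=
            hψlow (w s) hwsm ⟨Bw, fun y => hBw s y⟩ (hwpos s)
          have hsupb : (⨆ y', |w s y'|) ≤ c k :=
            ciSup_le fun y => (habs s y).trans_le (hgs y)
          have hmono := integral_mono (μ := κ r s x)
            (integrable_const (-Q * (⨆ y', |w s y'|))) hψint hlow
          rw [integral_const] at hmono
          simp only [probReal_univ, one_smul] at hmono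
          have hQh : Q * (⨆ y', |w s y'|) ≤ Q * h s :=
            mul_le_mul_of_nonneg_left (hsupb.trans hhs) hQ
          have hFs : F s = ∫ y, ψ (w s) y ∂(κ r s x) := by simp only [hFdef]
          rw [hFs]
          linarith
        have hIle : -(∫ s in r..t, F s) ≤ Q * ∫ u, h u := by
          have hQh0 : 0 ≤ Q * ∫ u, h u := mul_nonneg hQ (integral_nonneg hhnn)
          rw [intervalIntegral.integral_of_le hrt]
          by_cases hFint : IntegrableOn F (Set.Ioc r t) volume
          · have hg_int : IntegrableOn (fun u => -(Q * h u)) (Set.Ioc r t) volume :=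
              ((hh_int.const_mul Q).neg).integrableOn
            have hae : (fun u => -(Q * h u)) ≤ᵐ[volume.restrict (Set.Ioc r t)] F := by
              refine (ae_restrict_iff' measurableSet_Ioc).2 ?_
              have hta : volume ({t} : Set ℝ) = 0 := Real.volume_singleton
              filter_upwards [compl_mem_ae_iff.2 hta] with u hu humem
              have hut : u ≠ t := hu
              exact hFlb u humem.1.le (lt_of_le_of_ne humem.2 hut)
            have hmono := setIntegral_mono_ae_restrict hg_int hFint hae
            have hval : ∫ u in Set.Ioc r t, -(Q * h u) = -(Q * ∫ u in Set.Ioc r t, h u) := by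
              rw [integral_neg, integral_const_mul]
            have hsle : ∫ u in Set.Ioc r t, h u ≤ ∫ u, h u :=
              setIntegral_le_integral hh_int (Filter.Eventually.of_forall hhnn)
            rw [hval] at hmono
            have hmul := mul_le_mul_of_nonneg_left hsle hQ
            linarith
          · rw [integral_undef hFint]
            simpa using hQh0
        have hA : (∫ y, (1 - Real.exp (-ε * φ y)) / ε ∂(κ r t x)) ≤ M := by
          haveI := (hκ r t h0r hrt le_rfl).isProbabilityMeasure x
          have hb : ∀ y, ‖(1 - Real.exp (-ε * φ y)) / ε‖ ≤ M := by
            intro y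
            have hφy := hφpos y
            have h1 : Real.exp (-ε * φ y) ≤ 1 := by
              rw [← Real.exp_zero]
              apply Real.exp_le_exp.2
              nlinarith [hε.le]
            have h2 : 1 - Real.exp (-ε * φ y) ≤ ε * φ y := by
              have h3 := Real.add_one_le_exp (-ε * φ y)
              nlinarith
            have h4 : 0 ≤ (1 - Real.exp (-ε * φ y)) / ε := div_nonneg (by linarith) hε.le
            rw [Real.norm_eq_abs, abs_of_nonneg h4]
            have h5 : (1 - Real.exp (-ε * φ y)) / ε ≤ φ y := by
              rw [div_le_iff₀ hε]
              nlinarith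
            exact h5.trans (hφleM y)
          have hnorm := norm_integral_le_of_norm_le_const (μ := κ r t x)
            (Filter.Eventually.of_forall hb)
          rw [probReal_univ, mul_one] at hnorm
          rw [Real.norm_eq_abs] at hnorm
          exact (le_abs_self _).trans hnorm
        have hterm : ∀ k ∈ Finset.Ico (i : ℕ) n,
            Q * ((τ (k + 1) - τ k) * c k) ≤ (1 / 2) * c k := by
          intro k hk
          obtain ⟨hk1, hk2⟩ := Finset.mem_Ico.1 hk
          have hm := hmesh ⟨k, hk2⟩
          rw [← hτsc k hk2, ← hτcs k hk2] at hm
          calc Q * ((τ (k + 1) - τ k) * c k) = (Q * (τ (k + 1) - τ k)) * c k := by ring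
            _ ≤ (1 / 2) * c k := mul_le_mul_of_nonneg_right hm (hc0 k)
        have hQi : Q * ∫ u, h u ≤ (1 / 2) * Mi + (2 ^ m - 1) * M := by
          rw [hh_val, Finset.mul_sum]
          calc (∑ k ∈ Finset.Ico (i : ℕ) n, Q * ((τ (k + 1) - τ k) * c k))
              ≤ ∑ k ∈ Finset.Ico (i : ℕ) n, (1 / 2) * c k := Finset.sum_le_sum hterm
            _ = (1 / 2) * Mi + (2 ^ m - 1) * M := by
              rw [Finset.sum_Ico_eq_sum_range, he, Finset.sum_range_succ']
              have hci : (1 : ℝ) / 2 * c ((i : ℕ) + 0) = (1 / 2) * Mi := by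
                simp [hcdef]
              rw [hci]
              have hck : ∀ k ∈ Finset.range m,
                  (1 / 2 : ℝ) * c ((i : ℕ) + (k + 1)) = 2 ^ (m - k) * ((1 / 2) * M) := by
                intro k hk
                have hkm := Finset.mem_range.1 hk
                have hne : (i : ℕ) + (k + 1) ≠ (i : ℕ) := by omega
                have hexp : n - ((i : ℕ) + (k + 1)) = m - k := by omega
                simp only [hcdef, if_neg hne, hexp]
                ring
              rw [Finset.sum_congr rfl hck, ← Finset.sum_mul, aux_two_pow_sum]
              have h2 : (2 : ℝ) ^ (m + 1) = 2 * 2 ^ m := by ring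
              rw [h2]
              ring
        rw [heq]
        linarith
      have hMile : Mi ≤ 2 ^ (m + 1) * M := by
        have h1 : Mi ≤ (1 / 2) * Mi + 2 ^ m * M :=
          ciSup_le fun p => crux p.1 p.1.2 p.2
        have h2 : (2 : ℝ) ^ (m + 1) = 2 * 2 ^ m := by ring
        nlinarith
      intro r hr x
      rw [he]
      exact (hwleMi r hr x).trans hMile
  constructor
  · intro i r hr x
    rw [habs]
    exact key n i (Nat.sub_le n _) r hr x
  · intro x
    rw [habs]
    have hcs0 : ((⟨0, hn⟩ : Fin n)).castSucc = 0 := Fin.ext (by simp)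
    have h0mem : (0 : ℝ) ∈ Set.Ico (tp (⟨0, hn⟩ : Fin n).castSucc) (tp (⟨0, hn⟩ : Fin n).succ) := by
      constructor
      · rw [hcs0, htp0]
      · rw [← htp0]
        exact htpmono (Fin.succ_pos _)
    have := key n ⟨0, hn⟩ (Nat.sub_le n _) 0 h0mem x
    simpa using this
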